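/- Suppose P : ℝ → ℝ³ is differentiable and satisfies dP/dt = -(Ω(t) × P(t)) + (1/2) Σ_{k=1}^{N} ξ_k × (ξ_k × P(t)) for vectors ξ_1,…,ξ_N ∈ ℝ³ and a time-dependent vector Ω(t). Then d/dt |P(t)|² = - Σ_{k=1}^{N} |ξ_k × P(t)|², and in particular t ↦ |P(t)|² is nonincreasing. -/

import Mathlib

noncomputable def cross3 (a b : EuclideanSpace ℝ (Fin 3)) : EuclideanSpace ℝ (Fin 3) :=
  WithLp.toLp 2 ![a 1 * b 2 - a 2 * b 1, a 2 * b 0 - a 0 * b 2, a 0 * b 1 - a 1 * b 0]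

lemma inner_cross3_self (a b : EuclideanSpace ℝ (Fin 3)) :
    inner ℝ b (cross3 a b) = (0 : ℝ) := by
  simp [cross3, PiLp.inner_apply, Fin.sum_univ_three]
  ring

lemma inner_cross3_cross3 (a b : EuclideanSpace ℝ (Fin 3)) :
    inner ℝ b (cross3 a (cross3 a b)) = -(‖cross3 a b‖ ^ 2 : ℝ) := by
  rw [← real_inner_self_eq_norm_sq]
  simp [cross3, PiLp.inner_apply, Fin.sum_univ_three, EuclideanSpace.real_norm_sq_eq]
  ring

lemma cross3_inner_self (a b : EuclideanSpace ℝ (Fin 3)) :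
    inner ℝ (cross3 a b) b = (0 : ℝ) := by
  rw [real_inner_comm]; exact inner_cross3_self a b

lemma cross3_cross3_inner (a b : EuclideanSpace ℝ (Fin 3)) :
    inner ℝ (cross3 a (cross3 a b)) b = -(‖cross3 a b‖ ^ 2 : ℝ) := by
  rw [real_inner_comm]; exact inner_cross3_cross3 a b

/-- If `P : ℝ → ℝ³` satisfies `dP/dt = -(Ω(t) × P(t)) + (1/2) ∑ₖ ξₖ × (ξₖ × P(t))`, then
`d/dt ‖P t‖² = -∑ₖ ‖ξₖ × P t‖²`, and in particular `t ↦ ‖P t‖²` is nonincreasing. -/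
theorem stmt3 (N : ℕ) (ξ : Fin N → EuclideanSpace ℝ (Fin 3))
    (Ω : ℝ → EuclideanSpace ℝ (Fin 3)) (P : ℝ → EuclideanSpace ℝ (Fin 3))
    (hP : ∀ t, HasDerivAt P
      (-(cross3 (Ω t) (P t)) + (1 / 2 : ℝ) • ∑ k, cross3 (ξ k) (cross3 (ξ k) (P t))) t) :
    (∀ t, HasDerivAt (fun s => ‖P s‖ ^ 2) (-(∑ k, ‖cross3 (ξ k) (P t)‖ ^ 2)) t) ∧
      Antitone fun t => ‖P t‖ ^ 2 := by
  have key : ∀ t, HasDerivAt (fun s => ‖P s‖ ^ 2) (-(∑ k, ‖cross3 (ξ k) (P t)‖ ^ 2)) t := by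
    intro t
    have h1 : HasDerivAt (fun s => (inner ℝ (P s) (P s) : ℝ))
        (inner ℝ (P t) (-(cross3 (Ω t) (P t)) + (1 / 2 : ℝ) • ∑ k, cross3 (ξ k) (cross3 (ξ k) (P t)))
          + inner ℝ (-(cross3 (Ω t) (P t)) + (1 / 2 : ℝ) • ∑ k, cross3 (ξ k) (cross3 (ξ k) (P t))) (P t)) t :=
      (hP t).inner ℝ (hP t)
    have heq : (inner ℝ (P t) (-(cross3 (Ω t) (P t)) + (1 / 2 : ℝ) • ∑ k, cross3 (ξ k) (cross3 (ξ k) (P t)))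
          + inner ℝ (-(cross3 (Ω t) (P t)) + (1 / 2 : ℝ) • ∑ k, cross3 (ξ k) (cross3 (ξ k) (P t))) (P t) : ℝ)
        = -(∑ k, ‖cross3 (ξ k) (P t)‖ ^ 2) := by
      rw [real_inner_comm (-(cross3 (Ω t) (P t)) + _) (P t)]
      rw [inner_add_left, inner_neg_left, cross3_inner_self, real_inner_smul_left, sum_inner]
      simp only [cross3_cross3_inner]
      simp
      ring
    have h2 : HasDerivAt (fun s => ‖P s‖ ^ 2) (-(∑ k, ‖cross3 (ξ k) (P t)‖ ^ 2)) t := by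
      rw [← heq]
      convert h1 using 2 with s
      rw [real_inner_self_eq_norm_sq]
    exact h2
  refine ⟨key, ?_⟩
  apply antitone_of_deriv_nonpos
  · intro t
    exact (key t).differentiableAt
  · intro t
    rw [(key t).deriv]
    apply neg_nonpos.mpr
    positivity
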